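/- Let V be an FI-module with values in abelian groups and let N ≥ 0 be such that H₀(V)(T) = 0 and H₁(V)(T) = 0 for every finite set T with |T| > N (where H₁ is the first left derived functor of H₀; equivalently, assume for all |T| > N that the natural map colim_{S ⊊ T} V(S) → V(T) is an isomorphism). Then for every finite set T with |T| ≥ N, the natural map colim_{S ⊆ T, |S| ≤ N} V(S) → V(T) is an isomorphism. -/

import Mathlib

open CategoryTheory Limits

/-- The category `FI` of finite sets (finite subsets of `ℕ`) and injections. -/
structure FIob where
  s : Finset ℕ

instance : Category FIob where
  Hom A B := {f : ↥A.s → ↥B.s // Function.Injective f}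
  id A := ⟨id, fun _ _ h => h⟩
  comp f g := ⟨g.1 ∘ f.1, g.2.comp f.2⟩

/-- The poset of proper subsets of `T`, viewed inside `FI`. -/
def properFunctor (T : Finset ℕ) : {S : Finset ℕ // S ⊂ T} ⥤ FIob where
  obj S := ⟨S.1⟩
  map {S S'} h :=
    ⟨fun x => ⟨x.1, (show S.1 ⊆ S'.1 from leOfHom h) x.2⟩,
      fun a b hab => by cases a; cases b; simpa using hab⟩

/-- The poset of subsets of `T` of cardinality at most `N`, viewed inside `FI`. -/
def smallFunctor (T : Finset ℕ) (N : ℕ) : {S : Finset ℕ // S ⊆ T ∧ S.card ≤ N} ⥤ FIob where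
  obj S := ⟨S.1⟩
  map {S S'} h :=
    ⟨fun x => ⟨x.1, (show S.1 ⊆ S'.1 from leOfHom h) x.2⟩,
      fun a b hab => by cases a; cases b; simpa using hab⟩

/-- The canonical cocone on `S ↦ V(S)`, `S ⊊ T`, with apex `V(T)`, whose legs are
induced by the inclusions `S ⊆ T`. -/
def coconeProper (V : FIob ⥤ AddCommGrpCat) (T : Finset ℕ) :
    Cocone (properFunctor T ⋙ V) where
  pt := V.obj ⟨T⟩
  ι :=
    { app := fun S => V.map
        ⟨fun x => ⟨x.1, S.2.subset x.2⟩, fun a b hab => by cases a; cases b; simpa using hab⟩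
      naturality := by
        intro S S' h
        dsimp
        rw [Category.comp_id, ← V.map_comp]
        rfl }

/-- The canonical cocone on `S ↦ V(S)`, for `S ⊆ T` with `|S| ≤ N`, with apex `V(T)`. -/
def coconeSmall (V : FIob ⥤ AddCommGrpCat) (T : Finset ℕ) (N : ℕ) :
    Cocone (smallFunctor T N ⋙ V) where
  pt := V.obj ⟨T⟩
  ι :=
    { app := fun S => V.map
        ⟨fun x => ⟨x.1, S.2.1 x.2⟩, fun a b hab => by cases a; cases b; simpa using hab⟩
      naturality := by
        intro S S' h
        dsimp
        rw [Category.comp_id, ← V.map_comp]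
        rfl }

namespace Stmt5Aux

/-- Inclusion morphism in `FIob`. -/
def incl {A B : Finset ℕ} (h : A ⊆ B) : FIob.mk A ⟶ FIob.mk B :=
  ⟨fun x => ⟨x.1, h x.2⟩, fun a b hab => by cases a; cases b; simpa using hab⟩

lemma incl_comp {A B C : Finset ℕ} (h1 : A ⊆ B) (h2 : B ⊆ C) :
    incl h1 ≫ incl h2 = incl (h1.trans h2) := rfl

lemma incl_refl {A : Finset ℕ} : incl (subset_refl A) = 𝟙 (FIob.mk A) := rfl

lemma coconeSmall_app (V : FIob ⥤ AddCommGrpCat) (T : Finset ℕ) (N : ℕ)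
    (S : {S : Finset ℕ // S ⊆ T ∧ S.card ≤ N}) :
    (coconeSmall V T N).ι.app S = V.map (incl S.2.1) := rfl

lemma coconeProper_app (V : FIob ⥤ AddCommGrpCat) (T : Finset ℕ)
    (S : {S : Finset ℕ // S ⊂ T}) :
    (coconeProper V T).ι.app S = V.map (incl S.2.subset) := rfl

/-- The colimit of the small diagram when `T.card ≤ N`: the poset has a terminal object. -/
def isColimitSmallOfCardLe (V : FIob ⥤ AddCommGrpCat) {T : Finset ℕ} {N : ℕ}
    (h : T.card ≤ N) : IsColimit (coconeSmall V T N) where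
  desc c := c.ι.app ⟨T, subset_refl T, h⟩
  fac c j := by
    obtain ⟨S, h1, h2⟩ := j
    exact c.w (homOfLE (show (⟨S, h1, h2⟩ : {S : Finset ℕ // S ⊆ T ∧ S.card ≤ N}) ≤
      ⟨T, subset_refl T, h⟩ from h1))
  uniq c m hm := by
    have := hm ⟨T, subset_refl T, h⟩
    rw [show (coconeSmall V T N).ι.app ⟨T, subset_refl T, h⟩ = 𝟙 _ from V.map_id _] at this
    exact (Category.id_comp m).symm.trans this

/-- Restricting a cocone over the small diagram for `T` to the small diagram for `S ⊆ T`. -/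
def restrCocone (V : FIob ⥤ AddCommGrpCat) {T : Finset ℕ} {N : ℕ}
    (c : Cocone (smallFunctor T N ⋙ V)) {S : Finset ℕ} (hS : S ⊆ T) :
    Cocone (smallFunctor S N ⋙ V) where
  pt := c.pt
  ι :=
    { app := fun S' => c.ι.app ⟨S'.1, S'.2.1.trans hS, S'.2.2⟩
      naturality := fun a b f => by
        simp only [Functor.const_obj_map, Category.comp_id]
        exact c.w (homOfLE (show (⟨a.1, a.2.1.trans hS, a.2.2⟩ :
          {S' : Finset ℕ // S' ⊆ T ∧ S'.card ≤ N}) ≤ ⟨b.1, b.2.1.trans hS, b.2.2⟩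
          from leOfHom f)) }

/-- The map `V(S) → c.pt` for `S ⊊ T`, built from the cocone `c` (directly if
`S.card ≤ N`, via the inductive hypothesis otherwise). -/
noncomputable def phi (V : FIob ⥤ AddCommGrpCat) {N : ℕ} {T : Finset ℕ}
    (IH : ∀ S : Finset ℕ, S ⊂ T → N ≤ S.card → Nonempty (IsColimit (coconeSmall V S N)))
    (c : Cocone (smallFunctor T N ⋙ V)) (S : Finset ℕ) (hS : S ⊂ T) :
    V.obj ⟨S⟩ ⟶ c.pt :=
  if hle : S.card ≤ N then c.ι.app ⟨S, hS.subset, hle⟩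
  else (IH S hS (le_of_not_ge hle)).some.desc (restrCocone V c hS.subset)

lemma phi_fac (V : FIob ⥤ AddCommGrpCat) {N : ℕ} {T : Finset ℕ}
    (IH : ∀ S : Finset ℕ, S ⊂ T → N ≤ S.card → Nonempty (IsColimit (coconeSmall V S N)))
    (c : Cocone (smallFunctor T N ⋙ V)) (S : Finset ℕ) (hS : S ⊂ T)
    (S' : Finset ℕ) (h1 : S' ⊆ S) (h2 : S'.card ≤ N) :
    V.map (incl h1) ≫ phi V IH c S hS = c.ι.app ⟨S', h1.trans hS.subset, h2⟩ := by
  unfold phi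
  split_ifs
  · next hle =>
      refine (congrArg (fun x => V.map (incl h1) ≫ x) (dif_pos hle)).trans ?_
      exact c.w (homOfLE (show (⟨S', h1.trans hS.subset, h2⟩ :
        {S : Finset ℕ // S ⊆ T ∧ S.card ≤ N}) ≤ ⟨S, hS.subset, hle⟩ from h1))
  · next hle =>
      refine (congrArg (fun x => V.map (incl h1) ≫ x) (dif_neg hle)).trans ?_
      exact (IH S hS (le_of_not_ge hle)).some.fac (restrCocone V c hS.subset) ⟨S', h1, h2⟩

lemma phi_uniq (V : FIob ⥤ AddCommGrpCat) {N : ℕ} {T : Finset ℕ}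
    (IH : ∀ S : Finset ℕ, S ⊂ T → N ≤ S.card → Nonempty (IsColimit (coconeSmall V S N)))
    (c : Cocone (smallFunctor T N ⋙ V)) (S : Finset ℕ) (hS : S ⊂ T)
    (ψ : V.obj ⟨S⟩ ⟶ c.pt)
    (hψ : ∀ (S' : Finset ℕ) (h1 : S' ⊆ S) (h2 : S'.card ≤ N),
      V.map (incl h1) ≫ ψ = c.ι.app ⟨S', h1.trans hS.subset, h2⟩) :
    ψ = phi V IH c S hS := by
  unfold phi
  split_ifs
  · next hle =>
      have := hψ S (subset_refl S) hle
      rw [show V.map (incl (subset_refl S)) = 𝟙 _ from V.map_id _, Category.id_comp] at this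
      refine Eq.trans ?_ (dif_pos hle).symm
      exact this
  · next hle =>
      refine Eq.trans ?_ (dif_neg hle).symm
      exact (IH S hS (le_of_not_ge hle)).some.uniq (restrCocone V c hS.subset) ψ
        (fun j => hψ j.1 j.2.1 j.2.2)

/-- The cocone over the proper-subset diagram built from `phi`. -/
noncomputable def properCocone (V : FIob ⥤ AddCommGrpCat) {N : ℕ} {T : Finset ℕ}
    (IH : ∀ S : Finset ℕ, S ⊂ T → N ≤ S.card → Nonempty (IsColimit (coconeSmall V S N)))
    (c : Cocone (smallFunctor T N ⋙ V)) :
    Cocone (properFunctor T ⋙ V) where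
  pt := c.pt
  ι :=
    { app := fun S => phi V IH c S.1 S.2
      naturality := fun a b f => by
        simp only [Functor.const_obj_map, Category.comp_id]
        refine phi_uniq V IH c a.1 a.2 _ (fun S' h1 h2 => ?_)
        refine (Category.assoc _ _ _).symm.trans ?_
        rw [show V.map (incl h1) ≫ (properFunctor T ⋙ V).map f
            = V.map (incl (h1.trans (leOfHom f))) from by
              rw [show (properFunctor T ⋙ V).map f = V.map (incl (leOfHom f)) from rfl,
                ]; exact (V.map_comp _ _).symm]
        exact phi_fac V IH c b.1 b.2 S' (h1.trans (leOfHom f)) h2 }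

/-- The inductive step. -/
noncomputable def stepIsColimit (V : FIob ⥤ AddCommGrpCat) {N : ℕ} {T : Finset ℕ}
    (hc : IsColimit (coconeProper V T)) (hNT : N < T.card)
    (IH : ∀ S : Finset ℕ, S ⊂ T → N ≤ S.card → Nonempty (IsColimit (coconeSmall V S N))) :
    IsColimit (coconeSmall V T N) where
  desc c := hc.desc (properCocone V IH c)
  fac c j := by
    obtain ⟨S, h1, h2⟩ := j
    have hlt : S ⊂ T := lt_of_le_of_ne h1 (by rintro rfl; omega)
    have hfac := hc.fac (properCocone V IH c) ⟨S, hlt⟩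
    have happ : (coconeSmall V T N).ι.app ⟨S, h1, h2⟩
        = (coconeProper V T).ι.app ⟨S, hlt⟩ := rfl
    refine (congrArg (· ≫ hc.desc (properCocone V IH c)) happ).trans (hfac.trans ?_)
    show phi V IH c S hlt = _
    unfold phi
    exact dif_pos h2
  uniq c m hm := by
    refine hc.uniq (properCocone V IH c) m (fun j => ?_)
    obtain ⟨S, hS⟩ := j
    refine phi_uniq V IH c S hS _ (fun S' h1 h2 => ?_)
    refine (Category.assoc _ _ _).symm.trans ?_
    rw [show V.map (incl h1) ≫ (coconeProper V T).ι.app ⟨S, hS⟩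
        = (coconeSmall V T N).ι.app ⟨S', h1.trans hS.subset, h2⟩ from by
          rw [coconeProper_app]; exact (V.map_comp _ _).symm]
    exact hm ⟨S', h1.trans hS.subset, h2⟩

end Stmt5Aux

/-- Let `V` be an FI-module (over `ℤ`) and `N ≥ 0` such that for every finite set `T`
with `|T| > N` the natural map `colim_{S ⊊ T} V(S) → V(T)` is an isomorphism
(equivalently, `H₀(V)` and `H₁(V)` vanish on sets of cardinality `> N`).  Then for
every finite set `T` with `|T| ≥ N`, the natural map
`colim_{S ⊆ T, |S| ≤ N} V(S) → V(T)` is an isomorphism. -/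
theorem stmt5 (V : FIob ⥤ AddCommGrpCat) (N : ℕ)
    (hyp : ∀ T : Finset ℕ, N < T.card → Nonempty (IsColimit (coconeProper V T)))
    (T : Finset ℕ) (hT : N ≤ T.card) :
    Nonempty (IsColimit (coconeSmall V T N)) := by
  have main : ∀ n : ℕ, ∀ T : Finset ℕ, T.card ≤ n → N ≤ T.card →
      Nonempty (IsColimit (coconeSmall V T N)) := by
    intro n
    induction n with
    | zero =>
        intro T hTn hNT
        exact ⟨Stmt5Aux.isColimitSmallOfCardLe V (le_trans hTn (Nat.zero_le N))⟩
    | succ n ih =>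
        intro T hTn hNT
        rcases lt_or_ge N T.card with h | h
        · exact ⟨Stmt5Aux.stepIsColimit V (hyp T h).some h
            (fun S hS hNS => ih S (by have := Finset.card_lt_card hS; omega) hNS)⟩
        · exact ⟨Stmt5Aux.isColimitSmallOfCardLe V h⟩
  exact main T.card T le_rfl hT
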